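/- arXiv:1511.03631 — 2 statements merged into one kernel-verified Lean document; each statement's English description precedes it below -/
import Mathlib

section
/- Define normal form terms of degree k over a unary operator f and finite generator set D in a Boolean algebra: N_0 = { D^α : α : D → {−1,1} }, and N_{k+1} = { D^α ∧ (⋀_{τ ∈ F_k^β} f(τ)) ∧ (⋀_{τ ∉ F_k^β} −f(τ)) } ranging over α : D → {−1,1} and β : N_k → {−1,1} (with F_k^β = {τ ∈ N_k : β(τ)=1}). Then for every k, the elements of N_k (as interpreted in any Boolean algebra with a normal additive unary operator f) sum to 1, and two syntactically distinct forms in N_k have meet 0. -/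
section Aux

variable {A : Type} [BooleanAlgebra A]

/-- The "atom" determined by a choice function `β`. -/
lemma univ_eq_univ {α : Type} (i1 i2 : Fintype α) :
    @Finset.univ α i1 = @Finset.univ α i2 := by
  congr 1
  exact Subsingleton.elim _ _

noncomputable def bAtom {ι : Type} [Fintype ι] (g : ι → A) (β : ι → Bool) : A :=
  (Finset.univ : Finset ι).inf fun j => if β j then g j else (g j)ᶜ

lemma bAtom_sup_aux {ι : Type} [Fintype ι] [DecidableEq ι] [Fintype (ι → Bool)] (g : ι → A) (s : Finset ι) :
    (Finset.univ : Finset (ι → Bool)).sup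
      (fun β => s.inf fun j => if β j then g j else (g j)ᶜ) = ⊤ := by
  classical
  induction s using Finset.induction with
  | empty =>
      simp only [Finset.inf_empty]
      exact Finset.sup_const Finset.univ_nonempty ⊤
  | @insert a s ha ih =>
      apply le_antisymm le_top
      have key : ∀ (β : ι → Bool) (b : Bool),
          (if b then g a else (g a)ᶜ) ⊓ (s.inf fun j => if β j then g j else (g j)ᶜ) ≤
          (Finset.univ : Finset (ι → Bool)).sup
            (fun β => (insert a s).inf fun j => if β j then g j else (g j)ᶜ) := by
        intro β b
        have hle := Finset.le_sup (f := fun β => (insert a s).inf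
            fun j => if β j then g j else (g j)ᶜ)
            (Finset.mem_univ (Function.update β a b))
        refine le_trans (le_of_eq ?_) hle
        show _ = (insert a s).inf _
        rw [Finset.inf_insert]
        congr 1
        · simp
        · exact (Finset.inf_congr rfl fun j hj => by
            rw [Function.update_of_ne (ne_of_mem_of_not_mem hj ha)]).symm
      calc (⊤ : A) = (g a ⊔ (g a)ᶜ) ⊓ (Finset.univ : Finset (ι → Bool)).sup
            (fun β => s.inf fun j => if β j then g j else (g j)ᶜ) := by
            rw [sup_compl_eq_top, ih, top_inf_eq]
        _ = (Finset.univ : Finset (ι → Bool)).sup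
            (fun β => (g a ⊔ (g a)ᶜ) ⊓ s.inf fun j => if β j then g j else (g j)ᶜ) :=
            Finset.sup_inf_distrib_left _ _ _
        _ ≤ _ := by
            refine Finset.sup_le fun β _ => ?_
            rw [inf_sup_right]
            refine sup_le ?_ ?_
            · simpa using key β true
            · simpa using key β false

lemma bAtom_sup {ι : Type} [Fintype ι] [Fintype (ι → Bool)] (g : ι → A) :
    (Finset.univ : Finset (ι → Bool)).sup (bAtom g) = ⊤ := by
  classical
  exact bAtom_sup_aux g Finset.univ

lemma bAtom_disj {ι : Type} [Fintype ι] (g : ι → A) {β β' : ι → Bool} (h : β ≠ β') :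
    bAtom g β ⊓ bAtom g β' = ⊥ := by
  obtain ⟨j, hj⟩ := Function.ne_iff.1 h
  have h1 : bAtom g β ≤ if β j then g j else (g j)ᶜ := Finset.inf_le (Finset.mem_univ j)
  have h2 : bAtom g β' ≤ if β' j then g j else (g j)ᶜ := Finset.inf_le (Finset.mem_univ j)
  apply le_bot_iff.1
  refine le_trans (inf_le_inf h1 h2) ?_
  cases hb : β j <;> cases hb' : β' j <;> simp_all

end Aux



/-- The constituent `D^α` in a Boolean algebra: the meet over `d ∈ D` of `d`
or its complement, according to the choice function `α` (`true` plays the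
role of `1`, `false` the role of `-1`). -/
def consBA {A : Type} [BooleanAlgebra A] (D : Finset A) (α : D → Bool) : A :=
  D.attach.inf (fun d => if α d then (d : A) else (d : A)ᶜ)

/-- Index data for normal forms of degree `k`: a form of degree `0` is given
by a choice function `α : D → {-1,1}`, and a form of degree `k+1` by a pair
`(α, β)` where `β` selects a subset of the degree-`k` forms. -/
def NFIdx {A : Type} (D : Finset A) : ℕ → Type
  | 0 => D → Bool
  | k + 1 => (D → Bool) × (NFIdx D k → Bool)

def nfIdxFinite {A : Type} (D : Finset A) : ∀ k, Finite (NFIdx D k)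
  | 0 => inferInstanceAs (Finite (D → Bool))
  | k + 1 =>
    haveI := nfIdxFinite D k
    inferInstanceAs (Finite ((D → Bool) × (NFIdx D k → Bool)))

noncomputable instance {A : Type} (D : Finset A) (k : ℕ) : Fintype (NFIdx D k) :=
  @Fintype.ofFinite _ (nfIdxFinite D k)

/-- The normal form of degree `k` with index data `i`: for degree `0` it is
the constituent `D^α`; for degree `k+1` it is `D^α` meet, for each degree-`k`
form `τ`, either `f τ` or its complement according to `β`. -/
noncomputable def nfVal {A : Type} [BooleanAlgebra A] (f : A → A) (D : Finset A) :
    ∀ k, NFIdx D k → A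
  | 0, α => consBA D α
  | k + 1, i =>
    consBA D i.1 ⊓
      (Finset.univ : Finset (NFIdx D k)).inf
        (fun j => if i.2 j then f (nfVal f D k j) else (f (nfVal f D k j))ᶜ)


lemma nfVal_zero {A : Type} [BooleanAlgebra A] (f : A → A) (D : Finset A)
    (α : NFIdx D 0) : nfVal f D 0 α = bAtom (fun d : ↥D => (d : A)) α := by
  show consBA D α = _
  unfold consBA bAtom
  rw [Finset.univ_eq_attach]

lemma nfVal_succ {A : Type} [BooleanAlgebra A] (f : A → A) (D : Finset A) (k : ℕ)
    (i : NFIdx D (k + 1)) :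
    nfVal f D (k + 1) i =
      bAtom (fun d : ↥D => (d : A)) (i : (↥D → Bool) × (NFIdx D k → Bool)).1 ⊓
      bAtom (fun τ => f (nfVal f D k τ)) (i : (↥D → Bool) × (NFIdx D k → Bool)).2 := by
  show consBA D i.1 ⊓ _ = _
  unfold consBA bAtom
  rw [Finset.univ_eq_attach]

/-- For each degree `k`, the normal forms of degree `k` join to `1` and
forms with distinct index data are pairwise disjoint. -/
theorem nfVal_partition {A : Type} [BooleanAlgebra A] (f : A → A) (D : Finset A)
    (hD : D.Nonempty) (hadd : ∀ a b : A, f (a ⊔ b) = f a ⊔ f b) (hnorm : f ⊥ = ⊥)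
    (k : ℕ) :
    (Finset.univ : Finset (NFIdx D k)).sup (nfVal f D k) = ⊤ ∧
    ∀ i j : NFIdx D k, i ≠ j → nfVal f D k i ⊓ nfVal f D k j = ⊥ := by
  classical
  cases k with
  | zero =>
    constructor
    · rw [univ_eq_univ (α := NFIdx D 0) _ (Pi.instFintype : Fintype (↥D → Bool))]
      show (Finset.univ : Finset (↥D → Bool)).sup (nfVal f D 0) = ⊤
      rw [Finset.sup_congr rfl fun (α : ↥D → Bool) _ =>
        (nfVal_zero f D α : nfVal f D 0 α = bAtom (fun d : ↥D => (d : A)) α)]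
      exact bAtom_sup _
    · intro i j hij
      rw [nfVal_zero f D i, nfVal_zero f D j]
      exact bAtom_disj _ (hij : (i : ↥D → Bool) ≠ j)
  | succ k =>
    constructor
    · rw [univ_eq_univ (α := NFIdx D (k + 1)) _ (instFintypeProd (↥D → Bool) (NFIdx D k → Bool) : Fintype (NFIdx D (k + 1)))]
      show (Finset.univ : Finset ((↥D → Bool) × (NFIdx D k → Bool))).sup (nfVal f D (k + 1)) = ⊤
      rw [Finset.sup_congr rfl fun (i : (↥D → Bool) × (NFIdx D k → Bool)) _ =>
        (nfVal_succ f D k i)]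
      rw [← Finset.univ_product_univ, ← Finset.sup_inf_sup, bAtom_sup, bAtom_sup,
        top_inf_eq]
    · intro i j hij
      have h : (i : (↥D → Bool) × (NFIdx D k → Bool)).1 ≠ j.1 ∨
          (i : (↥D → Bool) × (NFIdx D k → Bool)).2 ≠ j.2 := by
        by_contra hc
        push_neg at hc
        exact hij (Prod.ext hc.1 hc.2)
      rw [nfVal_succ f D k i, nfVal_succ f D k j]
      apply le_bot_iff.1
      rcases h with h | h
      · refine le_trans (inf_le_inf inf_le_left inf_le_left) ?_
        rw [bAtom_disj _ h]
      · refine le_trans (inf_le_inf inf_le_right inf_le_right) ?_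
        rw [bAtom_disj _ h]
end

section
/- Every modal formula of modal depth at most 1 whose variables lie in a finite set X is Kripke-semantically equivalent to a disjunction of degree-1 modal constituents over X. -/
inductive ModalForm (P : Type) where
  | var : P → ModalForm P
  | fls : ModalForm P
  | neg : ModalForm P → ModalForm P
  | conj : ModalForm P → ModalForm P → ModalForm P
  | disj : ModalForm P → ModalForm P → ModalForm P
  | dia : ModalForm P → ModalForm P
  deriving DecidableEq

/-- A Kripke model with worlds `W`: accessibility relation and valuation. -/
structure Kripke (P W : Type) where
  R : W → W → Prop
  V : W → P → Prop

/-- Truth of a modal formula at a world of a Kripke model; `◇φ` holds at `w`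
iff `φ` holds at some `R`-successor of `w`. -/
def ModalForm.sat {P W : Type} (M : Kripke P W) : W → ModalForm P → Prop
  | w, .var p => M.V w p
  | _, .fls => False
  | w, .neg φ => ¬ ModalForm.sat M w φ
  | w, .conj φ ψ => ModalForm.sat M w φ ∧ ModalForm.sat M w ψ
  | w, .disj φ ψ => ModalForm.sat M w φ ∨ ModalForm.sat M w ψ
  | w, .dia φ => ∃ u, M.R w u ∧ ModalForm.sat M u φ

/-- The literal `p` or `¬p` according to `b` (`true` for `1`, `false` for `-1`). -/
def ModalForm.lit {P : Type} (b : Bool) (p : P) : ModalForm P :=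
  if b then .var p else .neg (.var p)

/-- The degree-0 constituent `X^α`. -/
noncomputable def mconstituent {P : Type} (X : Finset P) (α : X → Bool) : ModalForm P :=
  X.attach.toList.foldr (fun p acc => .conj (ModalForm.lit (α p) p.1) acc) (.neg .fls)

/-- Conjunction of a list of formulas; the empty conjunction is `⊤`. -/
def mBigConj {P : Type} (l : List (ModalForm P)) : ModalForm P :=
  l.foldr .conj (.neg .fls)

/-- Disjunction of a list of formulas; the empty disjunction is `⊥`. -/
def mBigDisj {P : Type} (l : List (ModalForm P)) : ModalForm P :=
  l.foldr .disj .fls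

/-- The degree-1 modal constituent determined by `α : X → {-1,1}` and the
subset `S` of the degree-0 constituents:
`X^α ∧ ⋀_{γ ∈ S} ◇X^γ ∧ ⋀_{γ ∉ S} ¬◇X^γ`. -/
noncomputable def deg1 {P : Type} [DecidableEq P] (X : Finset P)
    (α : X → Bool) (S : (X → Bool) → Bool) : ModalForm P :=
  .conj (mconstituent X α)
    (mBigConj ((Finset.univ : Finset (X → Bool)).toList.map
      (fun γ => if S γ then .dia (mconstituent X γ)
                else .neg (.dia (mconstituent X γ)))))

/-- Modal depth: maximal nesting of `◇`. -/
def ModalForm.depth {P : Type} : ModalForm P → ℕ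
  | .var _ => 0
  | .fls => 0
  | .neg φ => φ.depth
  | .conj φ ψ => max φ.depth ψ.depth
  | .disj φ ψ => max φ.depth ψ.depth
  | .dia φ => φ.depth + 1

def ModalForm.vars {P : Type} [DecidableEq P] : ModalForm P → Finset P
  | .var p => {p}
  | .fls => ∅
  | .neg φ => φ.vars
  | .conj φ ψ => φ.vars ∪ ψ.vars
  | .disj φ ψ => φ.vars ∪ ψ.vars
  | .dia φ => φ.vars

open Classical in
/-- Propositional (depth 0) evaluation under a valuation `α` on `X`. -/
noncomputable def eval0 {P : Type} (X : Finset P) (α : X → Bool) : ModalForm P → Bool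
  | .var p => if h : p ∈ X then α ⟨p, h⟩ else false
  | .fls => false
  | .neg φ => !eval0 X α φ
  | .conj φ ψ => eval0 X α φ && eval0 X α ψ
  | .disj φ ψ => eval0 X α φ || eval0 X α ψ
  | .dia _ => false

open Classical in
/-- Depth ≤ 1 evaluation under `α` plus a set `S` of successor types. -/
noncomputable def eval1 {P : Type} (X : Finset P) (α : X → Bool)
    (S : (X → Bool) → Bool) : ModalForm P → Bool
  | .var p => if h : p ∈ X then α ⟨p, h⟩ else false
  | .fls => false
  | .neg φ => !eval1 X α S φ
  | .conj φ ψ => eval1 X α S φ && eval1 X α S ψ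
  | .disj φ ψ => eval1 X α S φ || eval1 X α S ψ
  | .dia ψ => decide (∃ γ : X → Bool, S γ = true ∧ eval0 X γ ψ = true)

open Classical in
/-- The degree-0 type of a world. -/
noncomputable def wtype {P W : Type} (M : Kripke P W) (X : Finset P) (w : W) :
    X → Bool := fun p => decide (M.V w p.1)

open Classical in
/-- The set of degree-0 types of successors of a world. -/
noncomputable def wS {P W : Type} (M : Kripke P W) (X : Finset P) (w : W) :
    (X → Bool) → Bool := fun γ => decide (∃ u, M.R w u ∧ wtype M X u = γ)

lemma sat_bigDisj {P W : Type} (M : Kripke P W) (w : W) (l : List (ModalForm P)) :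
    ModalForm.sat M w (mBigDisj l) ↔ ∃ ψ ∈ l, ModalForm.sat M w ψ := by
  induction l with
  | nil => simp [mBigDisj, ModalForm.sat]
  | cons a l ih => simp [mBigDisj, ModalForm.sat] at ih ⊢; rw [ih]

lemma sat_bigConj {P W : Type} (M : Kripke P W) (w : W) (l : List (ModalForm P)) :
    ModalForm.sat M w (mBigConj l) ↔ ∀ ψ ∈ l, ModalForm.sat M w ψ := by
  induction l with
  | nil => simp [mBigConj, ModalForm.sat]
  | cons a l ih => simp only [mBigConj, List.foldr_cons, ModalForm.sat, List.mem_cons] at ih ⊢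
                   rw [ih]; constructor
                   · rintro ⟨h1, h2⟩ ψ (rfl | hm); exact h1; exact h2 _ hm
                   · intro h; exact ⟨h _ (Or.inl rfl), fun ψ hm => h _ (Or.inr hm)⟩

lemma sat_lit {P W : Type} (M : Kripke P W) (w : W) (b : Bool) (p : P) :
    ModalForm.sat M w (ModalForm.lit b p) ↔ (M.V w p ↔ b = true) := by
  cases b <;> simp [ModalForm.lit, ModalForm.sat]

lemma sat_mconstituent {P W : Type} (M : Kripke P W) (w : W) (X : Finset P)
    (α : X → Bool) :
    ModalForm.sat M w (mconstituent X α) ↔ wtype M X w = α := by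
  rw [show mconstituent X α = mBigConj (X.attach.toList.map
      (fun p => ModalForm.lit (α p) p.1)) by
    simp [mconstituent, mBigConj, List.foldr_map]]
  rw [sat_bigConj]
  constructor
  · intro h
    funext p
    have := h _ (List.mem_map.2 ⟨p, by simp, rfl⟩)
    rw [sat_lit] at this
    cases hα : α p <;> simp [hα] at this <;> simp [wtype, hα, this]
  · rintro rfl ψ hψ
    rcases List.mem_map.1 hψ with ⟨p, _, rfl⟩
    rw [sat_lit]
    simp [wtype]

lemma sat_eval0 {P W : Type} [DecidableEq P] (M : Kripke P W) (w : W) (X : Finset P)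
    (φ : ModalForm P) (hd : φ.depth = 0) (hv : φ.vars ⊆ X) :
    (ModalForm.sat M w φ ↔ eval0 X (wtype M X w) φ = true) := by
  induction φ with
  | var p =>
      have hp : p ∈ X := hv (by simp [ModalForm.vars])
      simp [ModalForm.sat, eval0, hp, wtype]
  | fls => simp [ModalForm.sat, eval0]
  | neg φ ih =>
      simp [ModalForm.vars] at hv
      simp [ModalForm.sat, eval0, ih hd hv]
  | conj φ ψ ih1 ih2 =>
      simp [ModalForm.depth] at hd
      simp [ModalForm.vars, Finset.union_subset_iff] at hv
      simp [ModalForm.sat, eval0, ih1 hd.1 hv.1, ih2 hd.2 hv.2]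
  | disj φ ψ ih1 ih2 =>
      simp [ModalForm.depth] at hd
      simp [ModalForm.vars, Finset.union_subset_iff] at hv
      simp [ModalForm.sat, eval0, ih1 hd.1 hv.1, ih2 hd.2 hv.2]
  | dia φ ih => simp [ModalForm.depth] at hd

lemma sat_eval1 {P W : Type} [DecidableEq P] (M : Kripke P W) (w : W) (X : Finset P)
    (φ : ModalForm P) (hd : φ.depth ≤ 1) (hv : φ.vars ⊆ X) :
    (ModalForm.sat M w φ ↔ eval1 X (wtype M X w) (wS M X w) φ = true) := by
  induction φ with
  | var p =>
      have hp : p ∈ X := hv (by simp [ModalForm.vars])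
      simp [ModalForm.sat, eval1, hp, wtype]
  | fls => simp [ModalForm.sat, eval1]
  | neg φ ih =>
      simp [ModalForm.vars] at hv
      simp [ModalForm.sat, eval1, ih hd hv]
  | conj φ ψ ih1 ih2 =>
      simp [ModalForm.depth] at hd
      simp [ModalForm.vars, Finset.union_subset_iff] at hv
      simp [ModalForm.sat, eval1, ih1 hd.1 hv.1, ih2 hd.2 hv.2]
  | disj φ ψ ih1 ih2 =>
      simp [ModalForm.depth] at hd
      simp [ModalForm.vars, Finset.union_subset_iff] at hv
      simp [ModalForm.sat, eval1, ih1 hd.1 hv.1, ih2 hd.2 hv.2]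
  | dia ψ ih =>
      have hdψ : ψ.depth = 0 := by
        simp [ModalForm.depth] at hd; omega
      have hvψ : ψ.vars ⊆ X := hv
      simp only [ModalForm.sat, eval1, decide_eq_true_eq]
      constructor
      · rintro ⟨u, hru, hu⟩
        exact ⟨wtype M X u, by simp [wS]; exact ⟨u, hru, rfl⟩,
          (sat_eval0 M u X ψ hdψ hvψ).1 hu⟩
      · rintro ⟨γ, hγ, hev⟩
        simp [wS] at hγ
        rcases hγ with ⟨u, hru, rfl⟩
        exact ⟨u, hru, (sat_eval0 M u X ψ hdψ hvψ).2 hev⟩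

lemma sat_deg1 {P W : Type} [DecidableEq P] (M : Kripke P W) (w : W) (X : Finset P)
    (α : X → Bool) (S : (X → Bool) → Bool) :
    ModalForm.sat M w (deg1 X α S) ↔ (wtype M X w = α ∧ wS M X w = S) := by
  simp only [deg1, ModalForm.sat, sat_mconstituent, sat_bigConj]
  constructor
  · rintro ⟨hα, h⟩
    refine ⟨hα, funext fun γ => ?_⟩
    have := h _ (List.mem_map.2 ⟨γ, by simp, rfl⟩)
    by_cases hS : S γ = true
    · simp [hS] at this ⊢
      simp only [ModalForm.sat] at this
      simp only [wS, decide_eq_true_eq]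
      rcases this with ⟨u, hru, hu⟩
      exact ⟨u, hru, (sat_mconstituent M u X γ).1 hu⟩
    · simp [hS] at this ⊢
      simp only [ModalForm.sat] at this
      simp only [wS, decide_eq_false_iff_not]
      rintro ⟨u, hru, hu⟩
      exact this ⟨u, hru, (sat_mconstituent M u X γ).2 hu⟩
  · rintro ⟨hα, rfl⟩
    refine ⟨hα, fun ψ hψ => ?_⟩
    rcases List.mem_map.1 hψ with ⟨γ, _, rfl⟩
    by_cases hS : wS M X w γ = true
    · simp [hS]
      simp only [wS, decide_eq_true_eq] at hS
      rcases hS with ⟨u, hru, hu⟩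
      simp only [ModalForm.sat]
      exact ⟨u, hru, (sat_mconstituent M u X γ).2 hu⟩
    · simp [hS]
      simp only [wS, decide_eq_true_eq] at hS
      simp only [ModalForm.sat, sat_mconstituent]
      exact hS

/-- Every modal formula of modal depth at most 1 with variables in a finite
set `X` is Kripke-semantically equivalent to a disjunction of degree-1 modal
constituents over `X`. -/
theorem depth_one_normal_form {P : Type} [DecidableEq P] (X : Finset P)
    (φ : ModalForm P) (hd : φ.depth ≤ 1) (hv : φ.vars ⊆ X) :
    ∃ L : List ((X → Bool) × ((X → Bool) → Bool)),
      ∀ (W : Type) (M : Kripke P W) (w : W),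
        ModalForm.sat M w φ ↔
          ModalForm.sat M w (mBigDisj (L.map (fun p => deg1 X p.1 p.2))) := by
  classical
  refine ⟨((Finset.univ : Finset ((X → Bool) × ((X → Bool) → Bool))).toList).filter
    (fun p => eval1 X p.1 p.2 φ), fun W M w => ?_⟩
  rw [sat_bigDisj]
  constructor
  · intro h
    refine ⟨deg1 X (wtype M X w) (wS M X w),
      List.mem_map.2 ⟨(wtype M X w, wS M X w), ?_, rfl⟩, ?_⟩
    · rw [List.mem_filter]
      exact ⟨by simp, (sat_eval1 M w X φ hd hv).1 h⟩
    · rw [sat_deg1]; exact ⟨rfl, rfl⟩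
  · rintro ⟨ψ, hψ, hsat⟩
    rcases List.mem_map.1 hψ with ⟨p, hp, rfl⟩
    rw [List.mem_filter] at hp
    rw [sat_deg1] at hsat
    rw [sat_eval1 M w X φ hd hv, hsat.1, hsat.2]
    exact hp.2
end
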